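/- Every finite lattice with exactly 7 elements that is strictly nondistributive is order-isomorphic to N̄5 (the extended pentagon) or to M̄3 (the extended diamond). -/
import Mathlib


/-- The order relation of the extended pentagon `N̄5`:
indices 0 = ⊥, 1 = α, 2 = β, 3 = γ, 4 = ⊤ (= α⊔β = γ⊔β), 5 = x, 6 = ⊤̄,
where ⊥ < α < γ < ⊤ < ⊤̄, β only below ⊤ and ⊤̄, and x is the isolated element
with x⁻ = γ and x⁺ = ⊤̄. -/
def relN5bar (i j : Fin 7) : Prop :=
  ((i : ℕ), (j : ℕ)) ∈
    ([(0,0),(0,1),(0,2),(0,3),(0,4),(0,5),(0,6),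
      (1,1),(1,3),(1,4),(1,5),(1,6),
      (2,2),(2,4),(2,6),
      (3,3),(3,4),(3,5),(3,6),
      (4,4),(4,6),
      (5,5),(5,6),
      (6,6)] : List (ℕ × ℕ))

/-- The order relation of the extended diamond `M̄3`:
indices 0 = ⊥, 1 = α, 2 = β, 3 = γ, 4 = ⊤, 5 = x, 6 = ⊤̄,
where α, β, γ are the three atoms of the diamond and x is the isolated element
with x⁻ = γ and x⁺ = ⊤̄. -/
def relM3bar (i j : Fin 7) : Prop :=
  ((i : ℕ), (j : ℕ)) ∈
    ([(0,0),(0,1),(0,2),(0,3),(0,4),(0,5),(0,6),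
      (1,1),(1,4),(1,6),
      (2,2),(2,4),(2,6),
      (3,3),(3,4),(3,5),(3,6),
      (4,4),(4,6),
      (5,5),(5,6),
      (6,6)] : List (ℕ × ℕ))

section StrictNondistrib

variable {L : Type*} [Lattice L] [Fintype L]

/-- If seven pairwise distinct elements live in a 7-element type, they exhaust it. -/
private lemma seven_exhaust (hcard : Fintype.card L = 7) (z0 a b y t x T : L)
    (hnd : ([z0, a, b, y, t, x, T] : List L).Nodup) :
    ∀ z : L, z = z0 ∨ z = a ∨ z = b ∨ z = y ∨ z = t ∨ z = x ∨ z = T := by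
  classical
  have h1 : ([z0, a, b, y, t, x, T] : List L).toFinset.card = 7 := by
    rw [List.toFinset_card_of_nodup hnd]; rfl
  have h2 : ([z0, a, b, y, t, x, T] : List L).toFinset = Finset.univ :=
    Finset.eq_univ_of_card _ (h1.trans hcard.symm)
  intro z
  have hz : z ∈ ([z0, a, b, y, t, x, T] : List L).toFinset := h2 ▸ Finset.mem_univ z
  simpa using hz

/-- Core analysis: either we get the extended pentagon, the extended diamond,
or `b ≤ x ⊓ (a ⊔ b)` (in which case one reruns with `a` and `b` swapped). -/
private lemma core (hcard : Fintype.card L = 7) (a b x : L)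
    (hy : ¬ x ⊓ (a ⊔ b) ≤ (x ⊓ a) ⊔ (x ⊓ b)) (hx : ¬ x ≤ a ⊔ b) :
    (∃ f : Fin 7 → L, Function.Bijective f ∧ ∀ i j, f i ≤ f j ↔ relN5bar i j) ∨
    (∃ f : Fin 7 → L, Function.Bijective f ∧ ∀ i j, f i ≤ f j ↔ relM3bar i j) ∨
    b ≤ x ⊓ (a ⊔ b) := by
  set t : L := a ⊔ b with htdef
  set y : L := x ⊓ t with hydef
  by_cases hby : b ≤ y
  · exact Or.inr (Or.inr hby)
  set z0 : L := y ⊓ b with hz0def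
  set T : L := x ⊔ t with hTdef
  have hyt : y ≤ t := inf_le_right
  have hyx : y ≤ x := inf_le_left
  have hat : a ≤ t := le_sup_left
  have hbt : b ≤ t := le_sup_right
  have htT : t ≤ T := le_sup_right
  have hxT : x ≤ T := le_sup_left
  have hz0b : z0 ≤ b := inf_le_right
  have hz0y : z0 ≤ y := inf_le_left
  have hz0t : z0 ≤ t := hz0y.trans hyt
  have hz0x : z0 ≤ x := hz0y.trans hyx
  have hya : ¬ y ≤ a := fun h => hy (le_sup_of_le_left (le_inf hyx h))
  have hyb : ¬ y ≤ b := fun h => hy (le_sup_of_le_right (le_inf hyx h))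
  have hab : ¬ a ≤ b := fun h => hyb (hyt.trans (sup_le h le_rfl))
  have hba : ¬ b ≤ a := fun h => hya (hyt.trans (sup_le le_rfl h))
  have hntx : ¬ t ≤ x := fun h => hby (hbt.trans (le_inf h le_rfl))
  have hnTt : ¬ T ≤ t := fun h => hx (hxT.trans h)
  have hnbx : ¬ b ≤ x := fun h => hby (le_inf h hbt)
  have hnty : ¬ t ≤ y := fun h => hby (hbt.trans h)
  -- pairwise distinctness
  have n01 : z0 ≠ a := fun h => hab (h.ge.trans hz0b)
  have n02 : z0 ≠ b := fun h => hby (h.ge.trans hz0y)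
  have n03 : z0 ≠ y := fun h => hyb (h.ge.trans hz0b)
  have n04 : z0 ≠ t := fun h => hab (hat.trans (h.ge.trans hz0b))
  have n05 : z0 ≠ x := fun h => hx (h.ge.trans hz0t)
  have n06 : z0 ≠ T := fun h => hnTt (h.ge.trans hz0t)
  have n12 : a ≠ b := fun h => hab h.le
  have n13 : a ≠ y := fun h => hya h.ge
  have n14 : a ≠ t := fun h => hba (hbt.trans h.ge)
  have n15 : a ≠ x := fun h => hx (h.ge.trans hat)
  have n16 : a ≠ T := fun h => hnTt (h.ge.trans hat)
  have n23 : b ≠ y := fun h => hby h.le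
  have n24 : b ≠ t := fun h => hab (hat.trans h.ge)
  have n25 : b ≠ x := fun h => hx (h.ge.trans hbt)
  have n26 : b ≠ T := fun h => hnTt (h.ge.trans hbt)
  have n34 : y ≠ t := fun h => hby (hbt.trans h.ge)
  have n35 : y ≠ x := fun h => hx (h.ge.trans hyt)
  have n36 : y ≠ T := fun h => hnTt (h.ge.trans hyt)
  have n45 : t ≠ x := fun h => hntx h.le
  have n46 : t ≠ T := fun h => hnTt h.ge
  have n56 : x ≠ T := fun h => hntx (htT.trans h.ge)
  have hnd : ([z0, a, b, y, t, x, T] : List L).Nodup := by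
    simp [n01, n02, n03, n04, n05, n06, n12, n13, n14, n15, n16,
      n23, n24, n25, n26, n34, n35, n36, n45, n46, n56]
  have huniv := seven_exhaust hcard z0 a b y t x T hnd
  -- the meet a ⊓ b is forced to be z0, hence z0 ≤ a
  have hz0a : z0 ≤ a := by
    rcases huniv (a ⊓ b) with h | h | h | h | h | h | h
    · exact h.ge.trans inf_le_left
    · exact absurd (h.ge.trans inf_le_right) hab
    · exact absurd (h.ge.trans inf_le_left) hba
    · exact absurd (h.ge.trans inf_le_left) hya
    · exact absurd (hbt.trans (h.ge.trans inf_le_left)) hba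
    · exact absurd (h.ge.trans (inf_le_left.trans hat)) hx
    · exact absurd (h.ge.trans (inf_le_left.trans hat)) hnTt
  have hz0T : z0 ≤ T := hz0t.trans htT
  have haT : a ≤ T := hat.trans htT
  have hbT : b ≤ T := hbt.trans htT
  have hyT : y ≤ T := hyt.trans htT
  have hnaz0 : ¬ a ≤ z0 := fun h => hab (h.trans hz0b)
  have hnbz0 : ¬ b ≤ z0 := fun h => hby (h.trans hz0y)
  have hnyz0 : ¬ y ≤ z0 := fun h => hyb (h.trans hz0b)
  have hntz0 : ¬ t ≤ z0 := fun h => hab (hat.trans (h.trans hz0b))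
  have hnta : ¬ t ≤ a := fun h => hba (hbt.trans h)
  have hntb : ¬ t ≤ b := fun h => hab (hat.trans h)
  have hnxz0 : ¬ x ≤ z0 := fun h => hx (h.trans hz0t)
  have hnxa : ¬ x ≤ a := fun h => hx (h.trans hat)
  have hnxb : ¬ x ≤ b := fun h => hx (h.trans hbt)
  have hnxy : ¬ x ≤ y := fun h => hx (h.trans hyt)
  have hnxt : ¬ x ≤ t := hx
  have hnTz0 : ¬ T ≤ z0 := fun h => hnTt (h.trans hz0t)
  have hnTa : ¬ T ≤ a := fun h => hnTt (h.trans hat)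
  have hnTb : ¬ T ≤ b := fun h => hnTt (h.trans hbt)
  have hnTy : ¬ T ≤ y := fun h => hnTt (h.trans hyt)
  have hnTx : ¬ T ≤ x := fun h => hntx (htT.trans h)
  by_cases hay : a ≤ y
  · -- pentagon case: ⊥ = z0, α = a, β = b, γ = y, ⊤ = t
    left
    have hax : a ≤ x := hay.trans hyx
    refine ⟨![z0, a, b, y, t, x, T], ?_, ?_⟩
    · refine (Fintype.bijective_iff_surjective_and_card _).mpr ⟨?_, by simp [hcard]⟩
      intro z
      rcases huniv z with h | h | h | h | h | h | h
      exacts [⟨0, h.symm⟩, ⟨1, h.symm⟩, ⟨2, h.symm⟩, ⟨3, h.symm⟩,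
        ⟨4, h.symm⟩, ⟨5, h.symm⟩, ⟨6, h.symm⟩]
    · intro i j
      fin_cases i <;> fin_cases j <;>
        simp +decide [relN5bar] <;>
        first
          | assumption
          | exact le_refl _
          | exact hz0a | exact hz0b | exact hz0y | exact hz0t | exact hz0x | exact hz0T
          | exact hay | exact hat | exact hax | exact haT
          | exact hbt | exact hbT
          | exact hyt | exact hyx | exact hyT
          | exact htT | exact hxT
  · -- diamond case: ⊥ = z0, atoms a, b, y, ⊤ = t
    right; left
    have hnax : ¬ a ≤ x := fun h => hay (le_inf h hat)
    refine ⟨![z0, a, b, y, t, x, T], ?_, ?_⟩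
    · refine (Fintype.bijective_iff_surjective_and_card _).mpr ⟨?_, by simp [hcard]⟩
      intro z
      rcases huniv z with h | h | h | h | h | h | h
      exacts [⟨0, h.symm⟩, ⟨1, h.symm⟩, ⟨2, h.symm⟩, ⟨3, h.symm⟩,
        ⟨4, h.symm⟩, ⟨5, h.symm⟩, ⟨6, h.symm⟩]
    · intro i j
      fin_cases i <;> fin_cases j <;>
        simp +decide [relM3bar] <;>
        first
          | assumption
          | exact le_refl _
          | exact hz0a | exact hz0b | exact hz0y | exact hz0t | exact hz0x | exact hz0T
          | exact hat | exact haT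
          | exact hbt | exact hbT
          | exact hyt | exact hyx | exact hyT
          | exact htT | exact hxT

end StrictNondistrib

theorem stmt_5 {L : Type*} [Lattice L] [Fintype L] (hcard : Fintype.card L = 7)
    (h : ∃ α β x : L, ¬ x ⊓ (α ⊔ β) ≤ (x ⊓ α) ⊔ (x ⊓ β) ∧ ¬ x ≤ α ⊔ β) :
    (∃ f : Fin 7 → L, Function.Bijective f ∧ ∀ i j, f i ≤ f j ↔ relN5bar i j) ∨
    (∃ f : Fin 7 → L, Function.Bijective f ∧ ∀ i j, f i ≤ f j ↔ relM3bar i j) := by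
  obtain ⟨a, b, x, hy, hx⟩ := h
  rcases core hcard a b x hy hx with h1 | h1 | hby
  · exact Or.inl h1
  · exact Or.inr h1
  · have hy' : ¬ x ⊓ (b ⊔ a) ≤ (x ⊓ b) ⊔ (x ⊓ a) := by
      rw [sup_comm b a, sup_comm (x ⊓ b) (x ⊓ a)]; exact hy
    have hx' : ¬ x ≤ b ⊔ a := by rw [sup_comm b a]; exact hx
    rcases core hcard b a x hy' hx' with h1 | h1 | hay
    · exact Or.inl h1
    · exact Or.inr h1
    · exfalso
      rw [sup_comm b a] at hay
      have hax : a ≤ x := hay.trans inf_le_left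
      have hbx : b ≤ x := hby.trans inf_le_left
      exact hy (inf_le_right.trans
        (sup_le_sup (le_inf hax le_rfl) (le_inf hbx le_rfl)))
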